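/- Let D > 0, T ≥ 1, and for a ∈ [−D, D] define g_a : [−D, D] → ℝ by g_a(x) = max{0, D/2 − |x − a|}. Then for any points x_1, …, x_T ∈ [−D, D], inf_{x ∈ [−D,D]} Σ_{t=1}^T g_{x_t}(x) ≤ DT/4. -/
import Mathlib


noncomputable section

/-- The 1-Lipschitz "hat" function `g_a(x) = max {0, D/2 - |x - a|}` of height `D/2`
centered at `a`. -/
def hatFn (D a x : ℝ) : ℝ := max 0 (D / 2 - |x - a|)

lemma hatFn_endpoints (D a : ℝ) (hD : 0 < D) (ha : a ∈ Set.Icc (-D) D) :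
    hatFn D a (-D) + hatFn D a D ≤ D / 2 := by
  obtain ⟨h1, h2⟩ := ha
  unfold hatFn
  rw [abs_of_nonpos (by linarith), abs_of_nonneg (by linarith)]
  rcases max_cases (0:ℝ) (D / 2 - -(-D - a)) with ⟨he1, h1'⟩ | ⟨he1, h1'⟩ <;>
    rcases max_cases (0:ℝ) (D / 2 - (D - a)) with ⟨he2, h2'⟩ | ⟨he2, h2'⟩ <;>
      rw [he1, he2] <;> linarith

/-- For any points `x_1, …, x_T ∈ [-D, D]`, the best fixed action in hindsight for the
losses `g_{x_t}` suffers total loss at most `DT/4`. -/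
theorem hat_losses_inf_le (D : ℝ) (hD : 0 < D) (T : ℕ) (hT : 1 ≤ T)
    (xs : ℕ → ℝ) (hxs : ∀ t < T, xs t ∈ Set.Icc (-D) D) :
    sInf ((fun x => ∑ t ∈ Finset.range T, hatFn D (xs t) x) '' Set.Icc (-D) D) ≤
      D * T / 4 := by
  set f : ℝ → ℝ := fun x => ∑ t ∈ Finset.range T, hatFn D (xs t) x with hf
  have hbdd : BddBelow (f '' Set.Icc (-D) D) := by
    refine ⟨0, ?_⟩
    rintro y ⟨x, _, rfl⟩
    exact Finset.sum_nonneg fun t _ => le_max_left _ _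
  have hmem1 : f (-D) ∈ f '' Set.Icc (-D) D :=
    ⟨-D, ⟨le_refl _, by linarith⟩, rfl⟩
  have hmem2 : f D ∈ f '' Set.Icc (-D) D :=
    ⟨D, ⟨by linarith, le_refl _⟩, rfl⟩
  have hsum : f (-D) + f D ≤ D / 2 * T := by
    rw [hf]
    simp only
    rw [← Finset.sum_add_distrib]
    calc ∑ t ∈ Finset.range T, (hatFn D (xs t) (-D) + hatFn D (xs t) D)
        ≤ ∑ t ∈ Finset.range T, D / 2 :=
          Finset.sum_le_sum fun t ht =>
            hatFn_endpoints D (xs t) hD (hxs t (Finset.mem_range.mp ht))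
      _ = D / 2 * T := by simp [mul_comm]
  rcases le_total (f (-D)) (f D) with h | h
  · calc sInf _ ≤ f (-D) := csInf_le hbdd hmem1
      _ ≤ D * T / 4 := by linarith
  · calc sInf _ ≤ f D := csInf_le hbdd hmem2
      _ ≤ D * T / 4 := by linarith
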